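/- arXiv:1410.2194 — 5 statements merged into one kernel-verified Lean document; each statement's English description precedes it below -/
import Mathlib

section
/- Let S and T be finite semigroups in which every subsemigroup generated by two elements is Mal'cev nilpotent. Then every subsemigroup of the direct product S × T generated by two elements is Mal'cev nilpotent. -/
/-! Common definitions: Mal'cev nilpotency, the relations η_n, η, the congruence η*,
Rees matrix semigroups (with and without zero), regularity, CS-diagonality,
the row relation ~, ideals, principal series and Rees factor isomorphisms. -/

/-- The pair `(λ_n, ρ_n)` of Mal'cev words in a monoid, with `λ₀ = x`, `ρ₀ = y`,
`λ_{k+1} = λ_k * z (k+1) * ρ_k` and `ρ_{k+1} = ρ_k * z (k+1) * λ_k`. -/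
def malcev {M : Type*} [Monoid M] (x y : M) (z : ℕ → M) : ℕ → M × M
  | 0 => (x, y)
  | k + 1 =>
      ((malcev x y z k).1 * z (k + 1) * (malcev x y z k).2,
       (malcev x y z k).2 * z (k + 1) * (malcev x y z k).1)

/-- A semigroup `S` is Mal'cev nilpotent if for some positive `n`,
`λ_n(a,b,c₁,…,c_n) = ρ_n(a,b,c₁,…,c_n)` for all `a b ∈ S` and all `cᵢ ∈ S¹`,
where `S¹ = WithOne S`. -/
def MalcevNilpotent (S : Type*) [Semigroup S] : Prop :=
  ∃ n : ℕ, 0 < n ∧ ∀ (a b : S) (z : ℕ → WithOne S),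
    (malcev (a : WithOne S) (b : WithOne S) z n).1 =
    (malcev (a : WithOne S) (b : WithOne S) z n).2

/-- The relation `η_n` on a semigroup `S`: `η₁` is the diagonal, and for `n > 1`,
`x η_n y` iff there are `z₁, …, z_n ∈ S¹` with `x = λ_n(x,y,z₁,…,z_n)` and
`y = ρ_n(x,y,z₁,…,z_n)`. -/
def etaN (S : Type*) [Semigroup S] (n : ℕ) (x y : S) : Prop :=
  (n = 1 ∧ x = y) ∨
  (1 < n ∧ ∃ z : ℕ → WithOne S,
    (x : WithOne S) = (malcev (x : WithOne S) (y : WithOne S) z n).1 ∧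
    (y : WithOne S) = (malcev (x : WithOne S) (y : WithOne S) z n).2)

/-- `η`, the transitive closure of the union of the relations `η_n`, `n ≥ 1`. -/
def eta (S : Type*) [Semigroup S] : S → S → Prop :=
  Relation.TransGen (fun x y => ∃ n, 1 ≤ n ∧ etaN S n x y)

/-- `η*`, the smallest congruence on `S` containing `η`. -/
def etaStar (S : Type*) [Semigroup S] : Con S :=
  conGen (eta S)

/-- A semigroup is an inverse semigroup if every element has exactly one inverse. -/
def IsInverseSemigroup (S : Type*) [Semigroup S] : Prop :=
  ∀ x : S, ∃! y : S, x * y * x = x ∧ y * x * y = y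

/-- A semigroup is completely regular if every element lies in a subgroup:
for every `a` there is `b` with `aba = a`, `ab = ba` and `bab = b`. -/
def IsCompletelyRegular (S : Type*) [Semigroup S] : Prop :=
  ∀ a : S, ∃ b : S, a * b * a = a ∧ a * b = b * a ∧ b * a * b = b

/-- A (possibly empty) two-sided ideal of a semigroup. -/
def IsIdeal (S : Type*) [Semigroup S] (I : Set S) : Prop :=
  ∀ s : S, ∀ x ∈ I, s * x ∈ I ∧ x * s ∈ I

/-- The Rees matrix semigroup `M⁰(G, n, m; P)` with zero `theta`; the sandwich
matrix entry `P j i : Option G` is `none` when the entry is `θ`. -/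
inductive ReesMatrix (G : Type*) (n m : ℕ) (P : Fin m → Fin n → Option G) where
  | theta : ReesMatrix G n m P
  | elem (g : G) (i : Fin n) (j : Fin m) : ReesMatrix G n m P

namespace ReesMatrix

variable {G : Type*} [Group G] {n m : ℕ} {P : Fin m → Fin n → Option G}

/-- Multiplication: `(g;i,j)(h;k,l) = (g p_{j,k} h; i, l)` if `p_{j,k} ≠ θ`,
and all other products are `θ`. -/
def mul : ReesMatrix G n m P → ReesMatrix G n m P → ReesMatrix G n m P
  | elem g i j, elem h k l =>
      match P j k with
      | some p => elem (g * p * h) i l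
      | none => theta
  | _, _ => theta

instance : Semigroup (ReesMatrix G n m P) where
  mul := mul
  mul_assoc a b c := by
    show mul (mul a b) c = mul a (mul b c)
    rcases a with _ | ⟨g, i, j⟩ <;> rcases b with _ | ⟨h, k, l⟩ <;>
      rcases c with _ | ⟨f, r, s⟩
    all_goals try rfl
    · rcases hjk : P j k with _ | p <;> simp [mul, hjk]
    · rcases hjk : P j k with _ | p <;> rcases hlr : P l r with _ | q <;>
        simp [mul, hjk, hlr, mul_assoc]

theorem mul_def (a b : ReesMatrix G n m P) : a * b = mul a b := rfl

instance [Finite G] : Finite (ReesMatrix G n m P) := by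
  have := Fintype.ofFinite G
  exact Finite.of_surjective
    (fun x : Option (G × Fin n × Fin m) =>
      match x with
      | none => (theta : ReesMatrix G n m P)
      | some (g, i, j) => elem g i j)
    (by rintro (_ | ⟨g, i, j⟩)
        · exact ⟨none, rfl⟩
        · exact ⟨some (g, i, j), rfl⟩)

end ReesMatrix

/-- `P` is regular: every row and every column of the sandwich matrix has a
nonzero entry. -/
def IsRegularSandwich {G : Type*} {n m : ℕ} (P : Fin m → Fin n → Option G) : Prop :=
  (∀ i : Fin n, ∃ j : Fin m, P j i ≠ none) ∧ (∀ j : Fin m, ∃ i : Fin n, P j i ≠ none)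

/-- `P` is CS-diagonal: whenever `p_{r,t}`, `p_{r',t}` and `p_{r,t'}` are all
nonzero, so is `p_{r',t'}`. -/
def IsCSDiagonal {G : Type*} {n m : ℕ} (P : Fin m → Fin n → Option G) : Prop :=
  ∀ (r r' : Fin m) (t t' : Fin n),
    P r t ≠ none → P r' t ≠ none → P r t' ≠ none → P r' t' ≠ none

/-- The relation `~` on rows: `i ~ i'` iff some column `j` has `p_{j,i} ≠ θ`
and `p_{j,i'} ≠ θ`. -/
def rowRel {G : Type*} {n m : ℕ} (P : Fin m → Fin n → Option G) (i i' : Fin n) : Prop :=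
  ∃ j : Fin m, P j i ≠ none ∧ P j i' ≠ none

/-- The completely simple Rees matrix semigroup `M(G, n, m; P)` (without zero),
all sandwich entries lying in `G`. -/
inductive ReesMatrixCS (G : Type*) (n m : ℕ) (P : Fin m → Fin n → G) where
  | elem (g : G) (i : Fin n) (j : Fin m) : ReesMatrixCS G n m P

namespace ReesMatrixCS

variable {G : Type*} [Group G] {n m : ℕ} {P : Fin m → Fin n → G}

instance : Semigroup (ReesMatrixCS G n m P) where
  mul a b := match a, b with
    | elem g i j, elem h k l => elem (g * P j k * h) i l
  mul_assoc a b c := by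
    rcases a with ⟨g, i, j⟩; rcases b with ⟨h, k, l⟩; rcases c with ⟨f, r, s⟩
    show elem _ _ _ = elem _ _ _
    simp [mul_assoc]

instance [Finite G] : Finite (ReesMatrixCS G n m P) := by
  have := Fintype.ofFinite G
  exact Finite.of_surjective
    (fun x : G × Fin n × Fin m => elem x.1 x.2.1 x.2.2)
    (by rintro ⟨g, i, j⟩; exact ⟨(g, i, j), rfl⟩)

end ReesMatrixCS

/-- A principal series of a finite semigroup `S`:
`S = C 1 ⊃ C 2 ⊃ … ⊃ C o ⊃ C (o+1) = ∅`, each `C p` an ideal of `S` with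
no ideal of `S` strictly between consecutive terms. -/
structure PrincipalSeries (S : Type*) [Semigroup S] where
  o : ℕ
  ho : 1 ≤ o
  C : ℕ → Set S
  first : C 1 = Set.univ
  last : C (o + 1) = ∅
  isIdeal : ∀ p, 1 ≤ p → p ≤ o → IsIdeal S (C p)
  strict : ∀ p, 1 ≤ p → p ≤ o → C (p + 1) ⊂ C p
  max : ∀ p, 1 ≤ p → p ≤ o → ∀ I : Set S, IsIdeal S I →
    C (p + 1) ⊆ I → I ⊆ C p → I = C (p + 1) ∨ I = C p

/-- `f` realises the Rees factor `A/B` (the Rees quotient of `A` by the ideal `B`;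
if `B = ∅` the factor is `A` itself) as the Rees matrix semigroup with zero
`M⁰(H, n', m'; Q)`. -/
def IsReesFactorM0 {S : Type*} [Semigroup S] (A B : Set S)
    {H : Type*} [Group H] {n' m' : ℕ} (Q : Fin m' → Fin n' → Option H)
    (f : S → ReesMatrix H n' m' Q) : Prop :=
  (∀ x ∈ A, ∀ y ∈ A, f (x * y) = f x * f y) ∧
  ((B = ∅ ∧ Set.BijOn f A Set.univ) ∨
   (B ≠ ∅ ∧ (∀ x ∈ B, f x = ReesMatrix.theta) ∧
     (∀ x ∈ A \ B, f x ≠ ReesMatrix.theta) ∧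
     Set.InjOn f (A \ B) ∧
     (∀ w : ReesMatrix H n' m' Q, w ≠ ReesMatrix.theta → ∃ x ∈ A \ B, f x = w)))

/-- `f` realises `A` as the completely simple Rees matrix semigroup
`M(H, n', m'; Q)` (without zero). -/
def IsReesFactorCS {S : Type*} [Semigroup S] (A : Set S)
    {H : Type*} [Group H] {n' m' : ℕ} (Q : Fin m' → Fin n' → H)
    (f : S → ReesMatrixCS H n' m' Q) : Prop :=
  (∀ x ∈ A, ∀ y ∈ A, f (x * y) = f x * f y) ∧ Set.BijOn f A Set.univ


private theorem malcev_map_aux {M N : Type*} [Monoid M] [Monoid N] (f : M →* N)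
    (x y : M) (z : ℕ → M) (k : ℕ) :
    f (malcev x y z k).1 = (malcev (f x) (f y) (f ∘ z) k).1 ∧
    f (malcev x y z k).2 = (malcev (f x) (f y) (f ∘ z) k).2 := by
  induction k with
  | zero => simp [malcev]
  | succ k ih => simp [malcev, ih.1, ih.2, Function.comp]

private theorem malcev_mono_aux {M : Type*} [Monoid M] (x y : M) (n m : ℕ) (h : n ≤ m)
    (H : ∀ z : ℕ → M, (malcev x y z n).1 = (malcev x y z n).2) :
    ∀ z : ℕ → M, (malcev x y z m).1 = (malcev x y z m).2 := by
  induction m with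
  | zero =>
    have : n = 0 := Nat.le_zero.mp h
    subst this; exact H
  | succ m ih =>
    rcases Nat.lt_or_ge n (m + 1) with h' | h'
    · intro z
      have := ih (Nat.lt_succ_iff.mp h') z
      simp [malcev, this]
    · have : n = m + 1 := le_antisymm h h'
      subst this; exact H

/-- If `S` and `T` are finite semigroups in which every
two-generated subsemigroup is Mal'cev nilpotent, then every two-generated
subsemigroup of `S × T` is Mal'cev nilpotent. -/
theorem two_generated_nilpotent_prod
    {S T : Type*} [Semigroup S] [Semigroup T] [Finite S] [Finite T]
    (hS : ∀ a b : S, MalcevNilpotent (Subsemigroup.closure {a, b}))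
    (hT : ∀ a b : T, MalcevNilpotent (Subsemigroup.closure {a, b}))
    (a b : S × T) : MalcevNilpotent (Subsemigroup.closure {a, b}) := by
  obtain ⟨n₁, hn₁, H₁⟩ := hS a.1 b.1
  obtain ⟨n₂, hn₂, H₂⟩ := hT a.2 b.2
  set U := Subsemigroup.closure ({a, b} : Set (S × T)) with hU
  set U₁ := Subsemigroup.closure ({a.1, b.1} : Set S) with hU₁
  set U₂ := Subsemigroup.closure ({a.2, b.2} : Set T) with hU₂
  have mem1 : ∀ x ∈ U, x.1 ∈ U₁ := by
    intro x hx
    induction hx using Subsemigroup.closure_induction with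
    | mem x hx =>
      rcases hx with h | h
      · exact Subsemigroup.subset_closure (by simp [h])
      · exact Subsemigroup.subset_closure (by simp [Set.eq_of_mem_singleton h])
    | mul x y _ _ hx hy => exact mul_mem hx hy
  have mem2 : ∀ x ∈ U, x.2 ∈ U₂ := by
    intro x hx
    induction hx using Subsemigroup.closure_induction with
    | mem x hx =>
      rcases hx with h | h
      · exact Subsemigroup.subset_closure (by simp [h])
      · exact Subsemigroup.subset_closure (by simp [Set.eq_of_mem_singleton h])
    | mul x y _ _ hx hy => exact mul_mem hx hy
  let p1 : U →ₙ* U₁ :=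
    { toFun := fun u => ⟨u.1.1, mem1 u.1 u.2⟩
      map_mul' := fun u v => rfl }
  let p2 : U →ₙ* U₂ :=
    { toFun := fun u => ⟨u.1.2, mem2 u.1 u.2⟩
      map_mul' := fun u v => rfl }
  let F1 : WithOne U →* WithOne U₁ := WithOne.mapMulHom p1
  let F2 : WithOne U →* WithOne U₂ := WithOne.mapMulHom p2
  have hinj : ∀ x y : WithOne U, F1 x = F1 y → F2 x = F2 y → x = y := by
    intro x y
    induction x using WithOne.recOneCoe with
    | one =>
      induction y using WithOne.recOneCoe with
      | one => intro _ _; rfl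
      | coe v =>
        intro h1 _
        simp only [F1, map_one, WithOne.mapMulHom_coe] at h1
        exact absurd h1.symm WithOne.coe_ne_one
    | coe u =>
      induction y using WithOne.recOneCoe with
      | one =>
        intro h1 _
        simp only [F1, map_one, WithOne.mapMulHom_coe] at h1
        exact absurd h1 WithOne.coe_ne_one
      | coe v =>
        intro h1 h2
        simp only [F1, F2, WithOne.mapMulHom_coe, WithOne.coe_inj] at h1 h2
        have e1 : (u : S × T).1 = (v : S × T).1 := congrArg Subtype.val h1
        have e2 : (u : S × T).2 = (v : S × T).2 := congrArg Subtype.val h2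
        have : (u : S × T) = (v : S × T) := Prod.ext e1 e2
        exact congrArg _ (Subtype.ext this)
  refine ⟨max n₁ n₂, lt_of_lt_of_le hn₁ (le_max_left _ _), fun u v z => ?_⟩
  apply hinj
  · have hm := malcev_map_aux F1 (u : WithOne U) (v : WithOne U) z (max n₁ n₂)
    rw [hm.1, hm.2]
    have : F1 (u : WithOne U) = ((p1 u : U₁) : WithOne U₁) := WithOne.mapMulHom_coe p1 u
    rw [this, WithOne.mapMulHom_coe p1 v]
    exact malcev_mono_aux _ _ n₁ (max n₁ n₂) (le_max_left _ _) (H₁ (p1 u) (p1 v)) (F1 ∘ z)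
  · have hm := malcev_map_aux F2 (u : WithOne U) (v : WithOne U) z (max n₁ n₂)
    rw [hm.1, hm.2]
    rw [WithOne.mapMulHom_coe p2 u, WithOne.mapMulHom_coe p2 v]
    exact malcev_mono_aux _ _ n₂ (max n₁ n₂) (le_max_right _ _) (H₂ (p2 u) (p2 v)) (F2 ∘ z)
end

section
/- Let S be a finite semigroup with a principal series S = S₁ ⊃ S₂ ⊃ … ⊃ S_o ⊃ S_{o+1} = ∅, and suppose the principal factor S_p/S_{p+1} is non-null (S_p S_p ⊄ S_{p+1}). If some element a ∈ S_p∖S_{p+1} is η*-related to an element of S_{p+1}, then every element of S_p∖S_{p+1} is η*-related to some element of S_{p+1}. -/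
/-- if some element of a non-null principal factor `S_p∖S_{p+1}`
is `η*`-related to an element of `S_{p+1}`, then every element of
`S_p∖S_{p+1}` is `η*`-related to some element of `S_{p+1}`. -/
theorem etaStar_into_ideal_of_exists (S : Type*) [Semigroup S] [Finite S]
    (PS : PrincipalSeries S) (p : ℕ) (hp1 : 1 ≤ p) (hpo : p ≤ PS.o)
    (hnonnull : ¬ ∀ x ∈ PS.C p, ∀ y ∈ PS.C p, x * y ∈ PS.C (p + 1))
    (a : S) (ha : a ∈ PS.C p \ PS.C (p + 1))
    (b : S) (hb : b ∈ PS.C (p + 1)) (hab : etaStar S a b) :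
    ∀ x ∈ PS.C p \ PS.C (p + 1), ∃ y ∈ PS.C (p + 1), etaStar S x y := by
  intro x hx
  -- the ideal C(p+1) (either by the series or because it's empty)
  have hI2 : IsIdeal S (PS.C (p + 1)) := by
    rcases lt_or_eq_of_le hpo with h | h
    · exact PS.isIdeal (p + 1) (by omega) (by omega)
    · intro s y hy
      rw [h, PS.last] at hy
      exact absurd hy (Set.notMem_empty y)
  have hsub : PS.C (p + 1) ⊆ PS.C p := (PS.strict p hp1 hpo).subset
  set J : Set S := PS.C (p + 1) ∪
    {s | s ∈ PS.C p ∧ ∃ y ∈ PS.C (p + 1), etaStar S s y} with hJ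
  have hJIdeal : IsIdeal S J := by
    intro t s hs
    rcases hs with hs | ⟨hsp, y, hy, hsy⟩
    · exact ⟨Or.inl (hI2 t s hs).1, Or.inl (hI2 t s hs).2⟩
    · have hIp := PS.isIdeal p hp1 hpo
      constructor
      · exact Or.inr ⟨(hIp t s hsp).1, t * y, (hI2 t y hy).1,
          (etaStar S).mul ((etaStar S).refl t) hsy⟩
      · exact Or.inr ⟨(hIp t s hsp).2, y * t, (hI2 t y hy).2,
          (etaStar S).mul hsy ((etaStar S).refl t)⟩
  have hJsub : J ⊆ PS.C p := by
    rintro s (hs | ⟨hs, _⟩)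
    · exact hsub hs
    · exact hs
  have haJ : a ∈ J := Or.inr ⟨ha.1, b, hb, hab⟩
  rcases PS.max p hp1 hpo J hJIdeal Set.subset_union_left hJsub with h | h
  · rw [h] at haJ
    exact absurd haJ ha.2
  · have hxJ : x ∈ J := h ▸ hx.1
    rcases hxJ with hxJ | ⟨_, y, hy, hxy⟩
    · exact absurd hxJ hx.2
    · exact ⟨y, hy, hxy⟩
end

section
/- Let S be a finite semigroup, M⁰(G,n,m;P) a CS-diagonal finite regular Rees matrix semigroup, and ι : M⁰(G,n,m;P) → S an injective semigroup homomorphism whose image is an ideal of S. Let s ∈ S and suppose s·ι(g;α,β) = ι(g';α',β) and s·ι(h;γ,λ) = ι(h';γ',λ) for some g, g', h, h' ∈ G, rows α, α', γ, γ' and columns β, λ. If α ~ γ, then α' ~ γ'. (This is the well-definedness of the minimal non-nilpotent representation Γ on ~-classes.) -/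
/-- well-definedness of the minimal non-nilpotent representation:
left multiplication by `s ∈ S` maps `~`-related rows of a CS-diagonal regular
Rees matrix ideal to `~`-related rows. -/
theorem minimal_representation_well_defined (S : Type*) [Semigroup S] [Finite S]
    (G : Type*) [Group G] [Finite G] (n m : ℕ) (P : Fin m → Fin n → Option G)
    (hreg : IsRegularSandwich P) (hdiag : IsCSDiagonal P)
    (ι : ReesMatrix G n m P →ₙ* S) (hinj : Function.Injective ι)
    (hideal : IsIdeal S (Set.range ι))
    (s : S) (g g' h h' : G) (α α' γ γ' : Fin n) (β lam : Fin m)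
    (h1 : s * ι (ReesMatrix.elem g α β) = ι (ReesMatrix.elem g' α' β))
    (h2 : s * ι (ReesMatrix.elem h γ lam) = ι (ReesMatrix.elem h' γ' lam))
    (hαγ : rowRel P α γ) : rowRel P α' γ' := by
  obtain ⟨j, hjα, hjγ⟩ := hαγ
  obtain ⟨j₁, hj₁⟩ := hreg.1 α'
  set x : ReesMatrix G n m P := ReesMatrix.elem 1 α' j₁ with hx
  obtain ⟨w, hw⟩ : ι x * s ∈ Set.range ι := (hideal s (ι x) ⟨x, rfl⟩).2
  have key : ∀ (a a' : G) (i i' : Fin n) (c : Fin m),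
      s * ι (ReesMatrix.elem a i c) = ι (ReesMatrix.elem a' i' c) →
      w * ReesMatrix.elem a i c = x * ReesMatrix.elem a' i' c := by
    intro a a' i i' c hs
    apply hinj
    rw [map_mul, map_mul, hw, mul_assoc, hs]
  have e1 := key g g' α α' β h1
  have e2 := key h h' γ γ' lam h2
  obtain ⟨p₁, hp₁⟩ : ∃ p, P j₁ α' = some p := Option.ne_none_iff_exists'.mp hj₁
  have hx1 : x * ReesMatrix.elem g' α' β = ReesMatrix.elem (1 * p₁ * g') α' β := by
    rw [ReesMatrix.mul_def]
    simp [ReesMatrix.mul, hp₁, hx]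
  rw [hx1] at e1
  -- w must be a nonzero element with a column hitting α
  rcases w with _ | ⟨w0, u, v⟩
  · rw [ReesMatrix.mul_def] at e1; simp [ReesMatrix.mul] at e1
  have hvα : P v α ≠ none := by
    intro hnone
    rw [ReesMatrix.mul_def] at e1
    simp [ReesMatrix.mul, hnone] at e1
  have hvγ : P v γ ≠ none := hdiag j v α γ hjα hvα hjγ
  obtain ⟨q, hq⟩ : ∃ q, P v γ = some q := Option.ne_none_iff_exists'.mp hvγ
  have hL : (ReesMatrix.elem w0 u v : ReesMatrix G n m P) * ReesMatrix.elem h γ lam =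
      ReesMatrix.elem (w0 * q * h) u lam := by
    rw [ReesMatrix.mul_def]; simp [ReesMatrix.mul, hq]
  rw [hL] at e2
  refine ⟨j₁, hj₁, ?_⟩
  intro hnone
  rw [ReesMatrix.mul_def] at e2
  simp [ReesMatrix.mul, hnone, hx] at e2
end

section
/- Let S be a finite semigroup, M⁰(G,n,m;P) a CS-diagonal finite regular Rees matrix semigroup, and ι : M⁰(G,n,m;P) → S an injective semigroup homomorphism whose image is an ideal of S. Let s ∈ S and suppose s·ι(g;α,β) = ι(g';α',β) and s·ι(h;γ,λ) = ι(h';γ',λ) for some g, g', h, h' ∈ G, rows α, α', γ, γ' and columns β, λ. If α' ~ γ', then α ~ γ. (This says the map induced by left multiplication by s on ~-classes, away from θ, is injective.) -/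
/-- injectivity of the minimal non-nilpotent representation on
`~`-classes: if left multiplication by `s ∈ S` sends rows `α, γ` to
`~`-related rows `α', γ'`, then `α ~ γ`. -/
theorem minimal_representation_injective (S : Type*) [Semigroup S] [Finite S]
    (G : Type*) [Group G] [Finite G] (n m : ℕ) (P : Fin m → Fin n → Option G)
    (hreg : IsRegularSandwich P) (hdiag : IsCSDiagonal P)
    (ι : ReesMatrix G n m P →ₙ* S) (hinj : Function.Injective ι)
    (hideal : IsIdeal S (Set.range ι))
    (s : S) (g g' h h' : G) (α α' γ γ' : Fin n) (β lam : Fin m)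
    (h1 : s * ι (ReesMatrix.elem g α β) = ι (ReesMatrix.elem g' α' β))
    (h2 : s * ι (ReesMatrix.elem h γ lam) = ι (ReesMatrix.elem h' γ' lam))
    (hα'γ' : rowRel P α' γ') : rowRel P α γ := by
  obtain ⟨j, hjα', hjγ'⟩ := hα'γ'
  set x : ReesMatrix G n m P := ReesMatrix.elem 1 α j with hx
  obtain ⟨y, hy⟩ : ι x * s ∈ Set.range ι := (hideal s (ι x) ⟨x, rfl⟩).2
  have key : ∀ (a : G) (b : Fin n) (c : Fin m) (a' : G) (b' : Fin n),
      s * ι (ReesMatrix.elem a b c) = ι (ReesMatrix.elem a' b' c) →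
      y * ReesMatrix.elem a b c = x * ReesMatrix.elem a' b' c := by
    intro a b c a' b' hsab
    apply hinj
    rw [map_mul, map_mul, hy, mul_assoc, hsab]
  have k1 := key g α β g' α' h1
  have k2 := key h γ lam h' γ' h2
  obtain ⟨p, hp⟩ : ∃ p, P j α' = some p := Option.ne_none_iff_exists'.mp hjα'
  obtain ⟨q, hq⟩ : ∃ q, P j γ' = some q := Option.ne_none_iff_exists'.mp hjγ'
  have hx1 : x * ReesMatrix.elem g' α' β = ReesMatrix.elem (1 * p * g') α β := by
    show ReesMatrix.mul _ _ = _
    simp [ReesMatrix.mul, hp, hx]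
  have hx2 : x * ReesMatrix.elem h' γ' lam = ReesMatrix.elem (1 * q * h') α lam := by
    show ReesMatrix.mul _ _ = _
    simp [ReesMatrix.mul, hq, hx]
  rw [hx1] at k1
  rw [hx2] at k2
  rcases y with _ | ⟨k, i₀, j₀⟩
  · exact absurd k1 (by simp [ReesMatrix.mul_def, ReesMatrix.mul])
  · refine ⟨j₀, ?_, ?_⟩
    · intro hnone
      rw [ReesMatrix.mul_def] at k1
      simp [ReesMatrix.mul, hnone] at k1
    · intro hnone
      rw [ReesMatrix.mul_def] at k2
      simp [ReesMatrix.mul, hnone] at k2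
end

section
/- Let S be a finite semigroup, M⁰(G,n,m;P) a CS-diagonal finite regular Rees matrix semigroup, ι : M⁰(G,n,m;P) → S an injective semigroup homomorphism whose image M is an ideal of S, and T a subsemigroup of S with S = M ∪ T. Suppose there exist v₁, v₂ ∈ T, ~-equivalence classes K₁, K₂, K₃, K₄ of rows with K₁ ≠ K₃, elements g₁, g₁', g₂, g₂', g₃, g₃', g₄, g₄' ∈ G, rows α₁ ∈ K₁, α₁' ∈ K₂, α₂ ∈ K₃, α₂' ∈ K₄, α₃ ∈ K₁, α₃' ∈ K₄, α₄ ∈ K₃, α₄' ∈ K₂ and columns β₁, β₂, β₃, β₄ such that v₁·ι(g₁;α₁,β₁) = ι(g₁';α₁',β₁), v₁·ι(g₂;α₂,β₂) = ι(g₂';α₂',β₂), v₂·ι(g₃;α₃,β₃) = ι(g₃';α₃',β₃), and v₂·ι(g₄;α₄,β₄) = ι(g₄';α₄',β₄). Then every element of M is η*-related in S to ι(θ). -/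
/-! ### Auxiliary lemmas for Statement 19 -/

section Aux19

open ReesMatrix

variable {S : Type*} [Semigroup S] {G : Type*} [Group G] {n m : ℕ}
  {P : Fin m → Fin n → Option G}

theorem malcev_succ {M : Type*} [Monoid M] (x y : M) (z : ℕ → M) (k : ℕ) :
    malcev x y z (k + 1) =
      ((malcev x y z k).1 * z (k + 1) * (malcev x y z k).2,
       (malcev x y z k).2 * z (k + 1) * (malcev x y z k).1) := rfl

theorem malcev_shift {M : Type*} [Monoid M] (x y : M) (z : ℕ → M) (t k : ℕ) :
    malcev x y z (t + k) =
      malcev (malcev x y z t).1 (malcev x y z t).2 (fun j => z (t + j)) k := by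
  induction k with
  | zero => rfl
  | succ k ih =>
    rw [← Nat.add_assoc, malcev_succ, malcev_succ, ih, Nat.add_assoc]

theorem rowRel_symm19 {i i' : Fin n} (h : rowRel P i i') : rowRel P i' i := by
  obtain ⟨j, h1, h2⟩ := h; exact ⟨j, h2, h1⟩

theorem rowRel_trans19 (hdiag : IsCSDiagonal P) {a b c : Fin n}
    (h1 : rowRel P a b) (h2 : rowRel P b c) : rowRel P a c := by
  obtain ⟨j, hja, hjb⟩ := h1
  obtain ⟨j', hj'b, hj'c⟩ := h2
  exact ⟨j, hja, hdiag j' j b c hj'b hjb hj'c⟩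

theorem colsee19 (hdiag : IsCSDiagonal P) {μ : Fin m} {t s : Fin n}
    (h1 : P μ t ≠ none) (h2 : rowRel P t s) : P μ s ≠ none := by
  obtain ⟨j, hjt, hjs⟩ := h2
  exact hdiag j μ t s hjt h1 hjs

theorem elem_mul_some {g h : G} {i : Fin n} {j : Fin m} {k : Fin n} {l : Fin m}
    {p : G} (hp : P j k = some p) :
    (elem g i j : ReesMatrix G n m P) * elem h k l = elem (g * p * h) i l := by
  show ReesMatrix.mul _ _ = _
  simp [ReesMatrix.mul, hp]

theorem elem_mul_none {g h : G} {i : Fin n} {j : Fin m} {k : Fin n} {l : Fin m}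
    (hp : P j k = none) :
    (elem g i j : ReesMatrix G n m P) * elem h k l = theta := by
  show ReesMatrix.mul _ _ = _
  simp [ReesMatrix.mul, hp]

theorem theta_mul19 (x : ReesMatrix G n m P) :
    (theta : ReesMatrix G n m P) * x = theta := by
  cases x <;> rfl

theorem mul_theta19 (x : ReesMatrix G n m P) :
    x * (theta : ReesMatrix G n m P) = theta := by
  cases x <;> rfl

/-- Action of `v` on elements with the same exact row `a₀`, arbitrary column. -/
theorem act_exact (hreg : IsRegularSandwich P)
    (ι : ReesMatrix G n m P →ₙ* S)
    {v : S} {g₀ g₀' : G} {a₀ a₀' : Fin n} {b₀ : Fin m}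
    (e : v * ι (elem g₀ a₀ b₀) = ι (elem g₀' a₀' b₀))
    (h₀ : G) (l : Fin m) :
    ∃ h', v * ι (elem h₀ a₀ l) = ι (elem h' a₀' l) := by
  obtain ⟨k, hk⟩ := hreg.2 b₀
  obtain ⟨p, hp⟩ := Option.ne_none_iff_exists'.mp hk
  refine ⟨g₀' * p * (p⁻¹ * g₀⁻¹ * h₀), ?_⟩
  have hsplit : (elem h₀ a₀ l : ReesMatrix G n m P) =
      elem g₀ a₀ b₀ * elem (p⁻¹ * g₀⁻¹ * h₀) k l := by
    rw [elem_mul_some hp]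
    congr 1
    group
  rw [hsplit, map_mul, ← mul_assoc, e, ← map_mul, elem_mul_some hp]

/-- Action of `v` on elements whose row is merely `~`-related to `a₀`. -/
theorem act_general (hreg : IsRegularSandwich P) (hdiag : IsCSDiagonal P)
    (ι : ReesMatrix G n m P →ₙ* S) (hinj : Function.Injective ι)
    (hideal : IsIdeal S (Set.range ι))
    {v : S} {g₀ g₀' : G} {a₀ a₀' : Fin n} {b₀ : Fin m}
    (e : v * ι (elem g₀ a₀ b₀) = ι (elem g₀' a₀' b₀))
    {α : Fin n} (hα : rowRel P α a₀) (h : G) (β : Fin m) :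
    ∃ (h' : G) (α'' : Fin n), rowRel P α'' a₀' ∧
      v * ι (elem h α β) = ι (elem h' α'' β) := by
  obtain ⟨js, hjs⟩ := hreg.1 a₀'
  obtain ⟨ps, hps⟩ := Option.ne_none_iff_exists'.mp hjs
  obtain ⟨W, hW⟩ := (hideal v (ι (elem (1:G) a₀ js)) ⟨_, rfl⟩).2
  -- identify the shape of W
  obtain ⟨h', hact⟩ := act_exact hreg ι e (1:G) js
  have hw1 : ι (W * elem (1:G) a₀ js) = ι (elem ((1:G) * ps * h') a₀ js) := by
    rw [map_mul, hW, mul_assoc, hact, ← map_mul, elem_mul_some hps]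
  have hw1' := hinj hw1
  rcases W with _ | ⟨u, r', j₀⟩
  · rw [theta_mul19] at hw1'
    cases hw1'
  rcases hq : P j₀ a₀ with _ | q
  · rw [elem_mul_none hq] at hw1'
    cases hw1'
  rw [elem_mul_some hq] at hw1'
  injection hw1' with k1 k2 k3
  rw [k2] at hW
  -- P j₀ α is nonzero
  obtain ⟨j₁, hj₁α, hj₁a₀⟩ := hα
  have hj₀α : P j₀ α ≠ none :=
    hdiag j₁ j₀ a₀ α hj₁a₀ (by simp [hq]) hj₁α
  obtain ⟨q₂, hq₂⟩ := Option.ne_none_iff_exists'.mp hj₀α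
  -- the element v * ι (elem h α β)
  obtain ⟨V, hV⟩ := (hideal v (ι (elem h α β)) ⟨_, rfl⟩).1
  have hkey : ι (elem (1:G) a₀ js * V) = ι (elem (u * q₂ * h) a₀ β) := by
    rw [map_mul, hV, ← mul_assoc, ← hW, ← map_mul, elem_mul_some hq₂]
  have hkey' := hinj hkey
  rcases V with _ | ⟨h'', α'', β''⟩
  · rw [mul_theta19] at hkey'
    cases hkey'
  rcases hq₃ : P js α'' with _ | q₃
  · rw [elem_mul_none hq₃] at hkey'
    cases hkey'
  rw [elem_mul_some hq₃] at hkey'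
  injection hkey' with k1' k2' k3'
  subst k3'
  exact ⟨h'', α'', ⟨js, by simp [hq₃], hjs⟩, hV.symm⟩

end Aux19

/-- if `S = M ∪ T` with `M` a CS-diagonal regular Rees matrix ideal
and elements `v₁, v₂ ∈ T` act on the `~`-classes of rows in the crossed pattern
`[…,K₁,K₂,…,K₃,K₄,…] ⊑ Γ(v₁)`, `[…,K₁,K₄,…,K₃,K₂,…] ⊑ Γ(v₂)` with `K₁ ≠ K₃`,
then every element of `M` is `η*`-related in `S` to `θ`. -/
theorem etaStar_theta_of_crossed_action (S : Type*) [Semigroup S] [Finite S]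
    (G : Type*) [Group G] [Finite G] (n m : ℕ) (P : Fin m → Fin n → Option G)
    (hreg : IsRegularSandwich P) (hdiag : IsCSDiagonal P)
    (ι : ReesMatrix G n m P →ₙ* S) (hinj : Function.Injective ι)
    (hideal : IsIdeal S (Set.range ι))
    (T : Subsemigroup S) (hcover : ∀ s : S, s ∈ Set.range ι ∨ s ∈ T)
    (v₁ v₂ : S) (hv₁ : v₁ ∈ T) (hv₂ : v₂ ∈ T)
    (k₁ k₂ k₃ k₄ : Fin n) (hk : ¬ rowRel P k₁ k₃)
    (g₁ g₁' g₂ g₂' g₃ g₃' g₄ g₄' : G)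
    (α₁ α₁' α₂ α₂' α₃ α₃' α₄ α₄' : Fin n) (β₁ β₂ β₃ β₄ : Fin m)
    (hα₁ : rowRel P α₁ k₁) (hα₁' : rowRel P α₁' k₂)
    (hα₂ : rowRel P α₂ k₃) (hα₂' : rowRel P α₂' k₄)
    (hα₃ : rowRel P α₃ k₁) (hα₃' : rowRel P α₃' k₄)
    (hα₄ : rowRel P α₄ k₃) (hα₄' : rowRel P α₄' k₂)
    (e₁ : v₁ * ι (ReesMatrix.elem g₁ α₁ β₁) = ι (ReesMatrix.elem g₁' α₁' β₁))
    (e₂ : v₁ * ι (ReesMatrix.elem g₂ α₂ β₂) = ι (ReesMatrix.elem g₂' α₂' β₂))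
    (e₃ : v₂ * ι (ReesMatrix.elem g₃ α₃ β₃) = ι (ReesMatrix.elem g₃' α₃' β₃))
    (e₄ : v₂ * ι (ReesMatrix.elem g₄ α₄ β₄) = ι (ReesMatrix.elem g₄' α₄' β₄)) :
    ∀ x ∈ Set.range ι, etaStar S x (ι ReesMatrix.theta) := by
  classical
  open ReesMatrix in
  -- row-class facts
  have hrel₁₃ : rowRel P α₁ α₃ :=
    rowRel_trans19 hdiag hα₁ (rowRel_symm19 hα₃)
  have hrel₂₄ : rowRel P α₂ α₄ :=
    rowRel_trans19 hdiag hα₂ (rowRel_symm19 hα₄)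
  have hrel₁₁ : rowRel P α₁ α₁ :=
    rowRel_trans19 hdiag hα₁ (rowRel_symm19 hα₁)
  have hrel₂₂ : rowRel P α₂ α₂ :=
    rowRel_trans19 hdiag hα₂ (rowRel_symm19 hα₂)
  have hn12 : ¬ rowRel P α₁ α₂ := fun hc =>
    hk (rowRel_trans19 hdiag (rowRel_symm19 hα₁) (rowRel_trans19 hdiag hc hα₂))
  -- columns seeing the K₂ and K₄ classes
  obtain ⟨μ, hμ⟩ := hreg.1 α₁'
  obtain ⟨ν, hν⟩ := hreg.1 α₂'
  -- the alternating sequence of middle factors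
  set z : ℕ → WithOne S :=
    fun j => if j % 2 = 1 then (v₂ : WithOne S) else (v₁ : WithOne S) with hzdef
  have hzodd : ∀ j, j % 2 = 1 → z j = (v₂ : WithOne S) := by
    intro j hj; simp [hzdef, hj]
  have hzeven : ∀ j, j % 2 = 0 → z j = (v₁ : WithOne S) := by
    intro j hj; simp [hzdef, hj]
  set x₀ : S := ι (elem 1 α₁ μ) with hx₀
  set y₀ : S := ι (elem 1 α₂ ν) with hy₀
  -- the key invariant
  have key : ∀ k : ℕ, ∃ a b : G,
      (malcev (x₀ : WithOne S) (y₀ : WithOne S) z (2*k)).1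
        = ((ι (elem a α₁ μ) : S) : WithOne S) ∧
      (malcev (x₀ : WithOne S) (y₀ : WithOne S) z (2*k)).2
        = ((ι (elem b α₂ ν) : S) : WithOne S) := by
    intro k
    induction k with
    | zero => exact ⟨1, 1, rfl, rfl⟩
    | succ k ih =>
      obtain ⟨a, b, h1, h2⟩ := ih
      -- step 1 : apply v₂
      obtain ⟨h₁, s₁, hs₁, heA⟩ :=
        act_general hreg hdiag ι hinj hideal e₄
          (rowRel_trans19 hdiag hα₂ (rowRel_symm19 hα₄)) b ν
      obtain ⟨g₁'', t₁, ht₁, heB⟩ :=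
        act_general hreg hdiag ι hinj hideal e₃
          (rowRel_trans19 hdiag hα₁ (rowRel_symm19 hα₃)) a μ
      have hμs₁ : P μ s₁ ≠ none :=
        colsee19 hdiag hμ
          (rowRel_trans19 hdiag hα₁'
            (rowRel_trans19 hdiag (rowRel_symm19 hα₄') (rowRel_symm19 hs₁)))
      obtain ⟨q₁, hq₁⟩ := Option.ne_none_iff_exists'.mp hμs₁
      have hνt₁ : P ν t₁ ≠ none :=
        colsee19 hdiag hν
          (rowRel_trans19 hdiag hα₂'
            (rowRel_trans19 hdiag (rowRel_symm19 hα₃') (rowRel_symm19 ht₁)))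
      obtain ⟨q₂, hq₂⟩ := Option.ne_none_iff_exists'.mp hνt₁
      have step1l : ι (elem a α₁ μ) * v₂ * ι (elem b α₂ ν)
          = ι (elem (a * q₁ * h₁) α₁ ν) := by
        rw [mul_assoc, heA, ← map_mul, elem_mul_some hq₁]
      have step1r : ι (elem b α₂ ν) * v₂ * ι (elem a α₁ μ)
          = ι (elem (b * q₂ * g₁'') α₂ μ) := by
        rw [mul_assoc, heB, ← map_mul, elem_mul_some hq₂]
      -- step 2 : apply v₁
      obtain ⟨h₂, s₂, hs₂, heC⟩ :=
        act_general hreg hdiag ι hinj hideal e₂ hrel₂₂ (b * q₂ * g₁'') μ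
      obtain ⟨h₃, s₃, hs₃, heD⟩ :=
        act_general hreg hdiag ι hinj hideal e₁ hrel₁₁ (a * q₁ * h₁) ν
      have hνs₂ : P ν s₂ ≠ none := colsee19 hdiag hν (rowRel_symm19 hs₂)
      obtain ⟨q₃, hq₃⟩ := Option.ne_none_iff_exists'.mp hνs₂
      have hμs₃ : P μ s₃ ≠ none := colsee19 hdiag hμ (rowRel_symm19 hs₃)
      obtain ⟨q₄, hq₄⟩ := Option.ne_none_iff_exists'.mp hμs₃
      have step2l : ι (elem (a * q₁ * h₁) α₁ ν) * v₁ * ι (elem (b * q₂ * g₁'') α₂ μ)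
          = ι (elem ((a * q₁ * h₁) * q₃ * h₂) α₁ μ) := by
        rw [mul_assoc, heC, ← map_mul, elem_mul_some hq₃]
      have step2r : ι (elem (b * q₂ * g₁'') α₂ μ) * v₁ * ι (elem (a * q₁ * h₁) α₁ ν)
          = ι (elem ((b * q₂ * g₁'') * q₄ * h₃) α₂ ν) := by
        rw [mul_assoc, heD, ← map_mul, elem_mul_some hq₄]
      refine ⟨(a * q₁ * h₁) * q₃ * h₂, (b * q₂ * g₁'') * q₄ * h₃, ?_, ?_⟩
      · have h2k : 2*(k+1) = 2*k+1+1 := by ring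
        rw [h2k, malcev_succ, malcev_succ, h1, h2,
          hzodd (2*k+1) (by omega), hzeven (2*k+1+1) (by omega)]
        show (((ι (elem a α₁ μ) : S) : WithOne S) * (v₂ : WithOne S)
            * ((ι (elem b α₂ ν) : S) : WithOne S)) * (v₁ : WithOne S)
            * (((ι (elem b α₂ ν) : S) : WithOne S) * (v₂ : WithOne S)
            * ((ι (elem a α₁ μ) : S) : WithOne S)) = _
        norm_cast
        rw [step1l, step1r, step2l]
      · have h2k : 2*(k+1) = 2*k+1+1 := by ring
        rw [h2k, malcev_succ, malcev_succ, h1, h2,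
          hzodd (2*k+1) (by omega), hzeven (2*k+1+1) (by omega)]
        show (((ι (elem b α₂ ν) : S) : WithOne S) * (v₂ : WithOne S)
            * ((ι (elem a α₁ μ) : S) : WithOne S)) * (v₁ : WithOne S)
            * (((ι (elem a α₁ μ) : S) : WithOne S) * (v₂ : WithOne S)
            * ((ι (elem b α₂ ν) : S) : WithOne S)) = _
        norm_cast
        rw [step1l, step1r, step2r]
  -- pigeonhole
  have hfin : Finite (WithOne S) := by
    have := Fintype.ofFinite S
    exact inferInstanceAs (Finite (Option S))
  obtain ⟨p', q', hpq', heq'⟩ :=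
    Finite.exists_ne_map_eq_of_infinite
      (fun k : ℕ => malcev (x₀ : WithOne S) (y₀ : WithOne S) z (2*k))
  -- a general step-B argument from a single η*-pair
  have main : ∀ p q : ℕ, p < q →
      malcev (x₀ : WithOne S) (y₀ : WithOne S) z (2*p)
        = malcev (x₀ : WithOne S) (y₀ : WithOne S) z (2*q) →
      ∀ x ∈ Set.range ι, etaStar S x (ι ReesMatrix.theta) := by
    intro p q hpq heq
    obtain ⟨a, b, h1, h2⟩ := key p
    set x' : S := ι (elem a α₁ μ) with hx'
    set y' : S := ι (elem b α₂ ν) with hy'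
    have hm2p : malcev (x₀ : WithOne S) (y₀ : WithOne S) z (2*p)
        = ((x' : WithOne S), (y' : WithOne S)) := by
      rw [Prod.ext_iff]; exact ⟨h1, h2⟩
    have hcyc : malcev (x' : WithOne S) (y' : WithOne S)
        (fun j => z (2*p + j)) (2*q - 2*p) = ((x' : WithOne S), (y' : WithOne S)) := by
      have hs := malcev_shift (x₀ : WithOne S) (y₀ : WithOne S) z (2*p) (2*q - 2*p)
      rw [show 2*p + (2*q - 2*p) = 2*q from by omega, hm2p] at hs
      rw [← hs, ← heq, hm2p]
    have hxy : eta S x' y' := by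
      apply Relation.TransGen.single
      refine ⟨2*q - 2*p, by omega, Or.inr ⟨by omega, fun j => z (2*p + j), ?_, ?_⟩⟩
      · rw [hcyc]
      · rw [hcyc]
    have hstar : etaStar S x' y' := ConGen.Rel.of x' y' hxy
    rintro x ⟨c, rfl⟩
    cases c with
    | theta => exact (etaStar S).refl _
    | elem c i j =>
      obtain ⟨r, hrr⟩ := hreg.1 α₁
      obtain ⟨pr, hpr⟩ := Option.ne_none_iff_exists'.mp hrr
      have hr2 : P r α₂ = none := by
        by_contra hcon
        exact hn12 ⟨r, hrr, hcon⟩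
      obtain ⟨t, htt⟩ := hreg.2 μ
      obtain ⟨q0, hq0⟩ := Option.ne_none_iff_exists'.mp htt
      have hxw : ι (elem (c * (pr * a * q0)⁻¹) i r) * x' * ι (elem 1 t j)
          = ι (elem c i j) := by
        rw [hx', ← map_mul, ← map_mul, elem_mul_some hpr, elem_mul_some hq0,
          show c * (pr * a * q0)⁻¹ * pr * a * q0 * 1 = c from by group]
      have hyw : ι (elem (c * (pr * a * q0)⁻¹) i r) * y' * ι (elem 1 t j)
          = ι ReesMatrix.theta := by
        rw [hy', ← map_mul, ← map_mul, elem_mul_none hr2, theta_mul19]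
      have hfinal := (etaStar S).mul
        ((etaStar S).mul ((etaStar S).refl (ι (elem (c * (pr * a * q0)⁻¹) i r))) hstar)
        ((etaStar S).refl (ι (elem 1 t j)))
      rw [hxw, hyw] at hfinal
      exact hfinal
  rcases lt_or_gt_of_ne hpq' with h | h
  · exact main p' q' h heq'
  · exact main q' p' h heq'.symm
end
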